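/- Let X be a closed subset of the unit circle 𝕋 (with metric ρ(e^{2πis}, e^{2πit}) = min_{k∈ℤ}|s−t+k|), let G ⊆ X be a finite subset, and let δ > 0. Then there exist a closed subset R ⊆ X with finitely many connected components containing G, and a continuous surjection g : X → R such that g(z) = z for all z ∈ G and ρ(g(z), z) ≤ δ for all z ∈ X. -/

import Mathlib

/-- `e^{2πit}`. -/
noncomputable def expc (t : ℝ) : ℂ := Complex.exp (2 * Real.pi * Complex.I * (t : ℂ))

noncomputable section

namespace S17

open scoped Classical

variable (Y : Set ℝ) (a : ℝ) (n : ℕ) (Γ : Finset ℝ)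

/-- grid points `a + j/n`, `j = 0..n`. -/
def grid : Finset ℝ := (Finset.range (n+1)).image (fun j : ℕ => a + (j : ℝ) / n)

/-- grid plus the finite set `Γ`. -/
def T : Finset ℝ := Γ ∪ grid a n

/-- a chosen non-`Y` point in `[t,t']`, if any (else junk `a`). -/
def w (t t' : ℝ) : ℝ := if h : ∃ x, x ∈ Set.Icc t t' ∧ x ∉ Y then h.choose else a

/-- the finite set of "cuts". -/
def C : Finset ℝ :=
  insert a (insert (a+1) (((T a n Γ) ×ˢ (T a n Γ)).image fun p : ℝ × ℝ => w Y a p.1 p.2))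

def S (c c' : ℝ) : Finset ℝ := (T a n Γ).filter (fun t => t ∈ Set.Ioo c c')

def P (c c' : ℝ) : Set ℝ := Y ∩ Set.Ioo c c'

def pk (c c' : ℝ) : ℝ := if h : (P Y c c').Nonempty then h.choose else a

def t0 (c c' : ℝ) : ℝ := if h : (S a n Γ c c').Nonempty then (S a n Γ c c').min' h else a

def q (c c' : ℝ) : ℝ := if t0 a n Γ c c' ∈ Y then t0 a n Γ c c' else pk Y a c c'

def u (c c' : ℝ) : ℝ :=
  if h : 2 ≤ (S a n Γ c c').card then (S a n Γ c c').min' (Finset.card_pos.mp (by omega))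
  else q Y a n Γ c c'

def v (c c' : ℝ) : ℝ :=
  if h : 2 ≤ (S a n Γ c c').card then (S a n Γ c c').max' (Finset.card_pos.mp (by omega))
  else q Y a n Γ c c'

def CL (x : ℝ) : ℝ := WithBot.unbotD a ((C Y a n Γ).filter (fun c => c < x)).max

def CR (x : ℝ) : ℝ := WithTop.untopD (a+1) ((C Y a n Γ).filter (fun c => x < c)).min

def f (x : ℝ) : ℝ :=
  max (u Y a n Γ (CL Y a n Γ x) (CR Y a n Γ x))
    (min (v Y a n Γ (CL Y a n Γ x) (CR Y a n Γ x)) x)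

/-- a gap between two consecutive cuts -/
def GOOD (c c' : ℝ) : Prop :=
  c ∈ C Y a n Γ ∧ c' ∈ C Y a n Γ ∧ ∀ b ∈ C Y a n Γ, b ∉ Set.Ioo c c'

/- basic lemmas -/

lemma grid_mem {j : ℕ} (hj : j ≤ n) : a + (j : ℝ)/n ∈ grid a n := by
  exact Finset.mem_image.2 ⟨j, Finset.mem_range.2 (by omega), rfl⟩

lemma grid_range (hn0 : 0 < n) : ∀ g ∈ grid a n, a ≤ g ∧ g ≤ a + 1 := by
  intro g hg
  obtain ⟨j, hj, rfl⟩ := Finset.mem_image.1 hg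
  have hj' : (j : ℝ) ≤ n := by exact_mod_cast Nat.le_of_lt_succ (Finset.mem_range.1 hj)
  have hn' : (0:ℝ) < n := by exact_mod_cast hn0
  constructor
  · have : 0 ≤ (j:ℝ)/n := div_nonneg (by positivity) hn'.le
    linarith
  · have : (j:ℝ)/n ≤ 1 := (div_le_one hn').2 hj'
    linarith

lemma hgrid (hn0 : 0 < n) {x x' : ℝ} (hx : a ≤ x) (hx' : x' ≤ a+1) (h : x + 1/n < x') :
    ∃ g ∈ grid a n, x < g ∧ g < x' := by
  have hn' : (0:ℝ) < n := by exact_mod_cast hn0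
  set j : ℕ := ⌊(x - a) * n⌋₊ + 1 with hj
  have h0 : (0:ℝ) ≤ (x - a) * n := mul_nonneg (by linarith) hn'.le
  have h1 : (x - a) * n < j := by
    rw [hj]; push_cast; exact Nat.lt_floor_add_one _
  have h2 : (j : ℝ) ≤ (x - a) * n + 1 := by
    rw [hj]; push_cast
    have := Nat.floor_le h0
    linarith
  have hgx : x < a + (j:ℝ)/n := by
    have : x - a < (j:ℝ)/n := (lt_div_iff₀ hn').2 h1
    linarith
  have hgx' : a + (j:ℝ)/n < x' := by
    have : (j:ℝ)/n ≤ (x - a) + 1/n := by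
      rw [div_le_iff₀ hn']
      have : ((x - a) + 1/n) * n = (x-a)*n + (1/n)*n := by ring
      rw [this, one_div_mul_cancel hn'.ne']
      linarith
    linarith
  have hjn : j ≤ n := by
    by_contra hc
    have : (n:ℝ) + 1 ≤ j := by exact_mod_cast by omega
    have : (1:ℝ) < (j:ℝ)/n := by
      rw [lt_div_iff₀ hn']; nlinarith
    linarith
  exact ⟨a + (j:ℝ)/n, grid_mem a n hjn, hgx, hgx'⟩

lemma T_range (hYa : Y ⊆ Set.Ioo a (a+1)) (hn0 : 0 < n) (hΓY : ↑Γ ⊆ Y) : ∀ t ∈ T a n Γ, a ≤ t ∧ t ≤ a+1 := by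
  intro t ht
  rcases Finset.mem_union.1 ht with h | h
  · have := hYa (hΓY h); exact ⟨this.1.le, by linarith [this.2]⟩
  · exact grid_range a n hn0 t h

lemma w_notY (hYa : Y ⊆ Set.Ioo a (a+1)) : ∀ t t', w Y a t t' ∉ Y := by
  intro t t'
  unfold w
  split_ifs with h
  · exact h.choose_spec.2
  · exact fun hc => (hYa hc).1.ne rfl

lemma w_mem {t t' : ℝ} (h : ∃ x, x ∈ Set.Icc t t' ∧ x ∉ Y) : w Y a t t' ∈ Set.Icc t t' := by
  unfold w
  rw [dif_pos h]
  exact h.choose_spec.1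

lemma a_mem_C : a ∈ C Y a n Γ := Finset.mem_insert_self _ _

lemma a1_mem_C : a + 1 ∈ C Y a n Γ :=
  Finset.mem_insert.2 (Or.inr (Finset.mem_insert_self _ _))

lemma C_notY (hYa : Y ⊆ Set.Ioo a (a+1)) : ∀ c ∈ C Y a n Γ, c ∉ Y := by
  intro c hc
  rcases Finset.mem_insert.1 hc with rfl | hc
  · exact fun hc => (hYa hc).1.ne rfl
  rcases Finset.mem_insert.1 hc with rfl | hc
  · exact fun hc => (hYa hc).2.ne' rfl
  · obtain ⟨p, _, rfl⟩ := Finset.mem_image.1 hc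
    exact w_notY Y a hYa p.1 p.2

lemma C_range (hYa : Y ⊆ Set.Ioo a (a+1)) (hn0 : 0 < n) (hΓY : ↑Γ ⊆ Y) : ∀ c ∈ C Y a n Γ, a ≤ c ∧ c ≤ a+1 := by
  intro c hc
  rcases Finset.mem_insert.1 hc with rfl | hc
  · exact ⟨le_refl _, by linarith⟩
  rcases Finset.mem_insert.1 hc with rfl | hc
  · exact ⟨by linarith, le_refl _⟩
  · obtain ⟨p, hp, rfl⟩ := Finset.mem_image.1 hc
    obtain ⟨hp1, hp2⟩ := Finset.mem_product.1 hp
    have h1 := T_range Y a n Γ hYa hn0 hΓY p.1 hp1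
    have h2' := T_range Y a n Γ hYa hn0 hΓY p.2 hp2
    unfold w
    split_ifs with h
    · have := h.choose_spec.1
      exact ⟨le_trans h1.1 this.1, le_trans this.2 h2'.2⟩
    · exact ⟨le_refl _, by linarith⟩

/-- key: between two cuts, any interval with endpoints in `T` lies in `Y`. -/
lemma pair_lemma (hYa : Y ⊆ Set.Ioo a (a+1)) {c c' t t' : ℝ} (hno : ∀ b ∈ C Y a n Γ, b ∉ Set.Ioo c c')
    (ht : t ∈ T a n Γ) (ht' : t' ∈ T a n Γ) (htI : t ∈ Set.Ioo c c') (htI' : t' ∈ Set.Ioo c c') :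
    Set.Icc t t' ⊆ Y := by
  intro x hx
  by_contra hxY
  have hex : ∃ z, z ∈ Set.Icc t t' ∧ z ∉ Y := ⟨x, hx, hxY⟩
  have hw := w_mem Y a hex
  have hwC : w Y a t t' ∈ C Y a n Γ := by
    refine Finset.mem_insert.2 (Or.inr (Finset.mem_insert.2 (Or.inr ?_)))
    exact Finset.mem_image.2 ⟨(t, t'), Finset.mem_product.2 ⟨ht, ht'⟩, rfl⟩
  exact hno _ hwC ⟨lt_of_lt_of_le htI.1 hw.1, lt_of_le_of_lt hw.2 htI'.2⟩


/- CL / CR lemmas -/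

lemma CL_spec {x : ℝ} (hax : a < x) :
    CL Y a n Γ x ∈ C Y a n Γ ∧ CL Y a n Γ x < x ∧
      ∀ b ∈ C Y a n Γ, b < x → b ≤ CL Y a n Γ x := by
  set Fl := (C Y a n Γ).filter (fun c => c < x) with hFl
  have hne : Fl.Nonempty := ⟨a, Finset.mem_filter.2 ⟨a_mem_C Y a n Γ, hax⟩⟩
  have hmax : CL Y a n Γ x = Fl.max' hne := by
    show WithBot.unbotD a Fl.max = _
    rw [← Finset.coe_max' hne]; rfl
  rw [hmax]
  have hm := Finset.max'_mem Fl hne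
  rw [Finset.mem_filter] at hm
  exact ⟨hm.1, hm.2, fun b hb hbx => Finset.le_max' Fl b (Finset.mem_filter.2 ⟨hb, hbx⟩)⟩

lemma CR_spec {x : ℝ} (hax : x < a + 1) :
    CR Y a n Γ x ∈ C Y a n Γ ∧ x < CR Y a n Γ x ∧
      ∀ b ∈ C Y a n Γ, x < b → CR Y a n Γ x ≤ b := by
  set Fl := (C Y a n Γ).filter (fun c => x < c) with hFl
  have hne : Fl.Nonempty := ⟨a + 1, Finset.mem_filter.2 ⟨a1_mem_C Y a n Γ, hax⟩⟩
  have hmin : CR Y a n Γ x = Fl.min' hne := by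
    show WithTop.untopD (a+1) Fl.min = _
    rw [← Finset.coe_min' hne]; rfl
  rw [hmin]
  have hm := Finset.min'_mem Fl hne
  rw [Finset.mem_filter] at hm
  exact ⟨hm.1, hm.2, fun b hb hbx => Finset.min'_le Fl b (Finset.mem_filter.2 ⟨hb, hbx⟩)⟩

/-- on a good gap, `CL` and `CR` are constant. -/
lemma CL_CR_eq (hYa : Y ⊆ Set.Ioo a (a+1)) (hn0 : 0 < n) (hΓY : ↑Γ ⊆ Y)
    {c c' x : ℝ} (hg : GOOD Y a n Γ c c') (hx : x ∈ Set.Ioo c c') :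
    CL Y a n Γ x = c ∧ CR Y a n Γ x = c' := by
  obtain ⟨hcC, hc'C, hno⟩ := hg
  have hca := (C_range Y a n Γ hYa hn0 hΓY c hcC).1
  have hc'a := (C_range Y a n Γ hYa hn0 hΓY c' hc'C).2
  have hax : a < x := lt_of_le_of_lt hca hx.1
  have hxa1 : x < a + 1 := lt_of_lt_of_le hx.2 hc'a
  obtain ⟨hClC, hClx, hClmax⟩ := CL_spec Y a n Γ hax
  obtain ⟨hCrC, hCrx, hCrmin⟩ := CR_spec Y a n Γ hxa1
  constructor
  · refine le_antisymm ?_ (hClmax c hcC hx.1)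
    by_contra hcon
    push_neg at hcon
    exact hno _ hClC ⟨hcon, lt_trans hClx hx.2⟩
  · refine le_antisymm (hCrmin c' hc'C hx.2) ?_
    by_contra hcon
    push_neg at hcon
    exact hno _ hCrC ⟨lt_trans hx.1 hCrx, hcon⟩

lemma f_on_gap (hYa : Y ⊆ Set.Ioo a (a+1)) (hn0 : 0 < n) (hΓY : ↑Γ ⊆ Y)
    {c c' x : ℝ} (hg : GOOD Y a n Γ c c') (hx : x ∈ Set.Ioo c c') :
    f Y a n Γ x = max (u Y a n Γ c c') (min (v Y a n Γ c c') x) := by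
  obtain ⟨h1, h2⟩ := CL_CR_eq Y a n Γ hYa hn0 hΓY hg hx
  unfold f
  rw [h1, h2]

/-- clamp case facts. -/
lemma clamp_facts (hYa : Y ⊆ Set.Ioo a (a+1)) (hn0 : 0 < n) (hΓY : ↑Γ ⊆ Y)
    {c c' : ℝ} (hg : GOOD Y a n Γ c c') (h2 : 2 ≤ (S a n Γ c c').card) :
    c < u Y a n Γ c c' ∧ u Y a n Γ c c' ≤ v Y a n Γ c c' ∧ v Y a n Γ c c' < c' ∧
      Set.Icc (u Y a n Γ c c') (v Y a n Γ c c') ⊆ Y ∧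
      u Y a n Γ c c' - c ≤ 1/n ∧ c' - v Y a n Γ c c' ≤ 1/n := by
  obtain ⟨hcC, hc'C, hno⟩ := hg
  have hne : (S a n Γ c c').Nonempty := Finset.card_pos.mp (by omega)
  have hu : u Y a n Γ c c' = (S a n Γ c c').min' hne := by unfold u; rw [dif_pos h2]
  have hv : v Y a n Γ c c' = (S a n Γ c c').max' hne := by unfold v; rw [dif_pos h2]
  have humem := Finset.min'_mem _ hne
  have hvmem := Finset.max'_mem _ hne
  rw [← hu] at humem; rw [← hv] at hvmem
  unfold S at humem hvmem
  rw [Finset.mem_filter] at humem hvmem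
  have huv : u Y a n Γ c c' ≤ v Y a n Γ c c' := by
    rw [hu, hv]; exact Finset.min'_le _ _ (Finset.max'_mem _ hne)
  have hsub : Set.Icc (u Y a n Γ c c') (v Y a n Γ c c') ⊆ Y :=
    pair_lemma Y a n Γ hYa hno humem.1 hvmem.1 humem.2 hvmem.2
  have hca := (C_range Y a n Γ hYa hn0 hΓY c hcC).1
  have hc'a := (C_range Y a n Γ hYa hn0 hΓY c' hc'C).2
  refine ⟨humem.2.1, huv, hvmem.2.2, hsub, ?_, ?_⟩
  · by_contra hcon
    push_neg at hcon
    obtain ⟨g, hgG, hgx, hgx'⟩ := hgrid a n hn0 (le_refl a |>.trans hca) 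
      (le_trans humem.2.2.le hc'a) (by linarith)
    have hgS : g ∈ S a n Γ c c' := by
      unfold S
      refine Finset.mem_filter.2 ⟨Finset.mem_union.2 (Or.inr hgG), hgx, lt_trans hgx' humem.2.2⟩
    have := Finset.min'_le _ g hgS
    rw [← hu] at this
    linarith
  · by_contra hcon
    push_neg at hcon
    obtain ⟨g, hgG, hgx, hgx'⟩ := hgrid a n hn0 (hca.trans hvmem.2.1.le) hc'a (by linarith)
    have hgS : g ∈ S a n Γ c c' := by
      unfold S
      refine Finset.mem_filter.2 ⟨Finset.mem_union.2 (Or.inr hgG), lt_trans hvmem.2.1 hgx, hgx'⟩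
    have := Finset.le_max' _ g hgS
    rw [← hv] at this
    linarith

/-- collapse case: the chosen point lies in the piece. -/
lemma q_mem (hYa : Y ⊆ Set.Ioo a (a+1))
    {c c' : ℝ} (hP : (P Y c c').Nonempty) : q Y a n Γ c c' ∈ P Y c c' := by
  unfold q
  split_ifs with ht
  · have hSne : (S a n Γ c c').Nonempty := by
      by_contra hc
      have : t0 a n Γ c c' = a := by unfold t0; rw [dif_neg hc]
      rw [this] at ht
      exact (hYa ht).1.ne rfl
    have : t0 a n Γ c c' = (S a n Γ c c').min' hSne := by unfold t0; rw [dif_pos hSne]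
    have hmem := Finset.min'_mem _ hSne
    rw [← this] at hmem
    unfold S at hmem
    rw [Finset.mem_filter] at hmem
    exact ⟨ht, hmem.2⟩
  · unfold pk
    rw [dif_pos hP]
    exact hP.choose_spec

/-- collapse case: the gap is short. -/
lemma gap_short (hYa : Y ⊆ Set.Ioo a (a+1)) (hn0 : 0 < n) (hΓY : ↑Γ ⊆ Y)
    {c c' : ℝ} (hg : GOOD Y a n Γ c c') (h2 : ¬ 2 ≤ (S a n Γ c c').card)
    (hcc : c < c') : c' - c ≤ 2/n := by
  obtain ⟨hcC, hc'C, hno⟩ := hg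
  have hca := (C_range Y a n Γ hYa hn0 hΓY c hcC).1
  have hc'a := (C_range Y a n Γ hYa hn0 hΓY c' hc'C).2
  have hn' : (0:ℝ) < n := by exact_mod_cast hn0
  by_contra hcon
  push_neg at hcon
  set m := (c + c')/2 with hm
  have h1n : 1/(n:ℝ) > 0 := by positivity
  obtain ⟨g1, hg1G, hg1a, hg1b⟩ := hgrid a n hn0 hca (by linarith : m ≤ a+1) (by
    have : 2/(n:ℝ) = 1/n + 1/n := by ring
    rw [this] at hcon
    simp only [hm]; linarith)
  obtain ⟨g2, hg2G, hg2a, hg2b⟩ := hgrid a n hn0 (by linarith : a ≤ m) hc'a (by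
    have : 2/(n:ℝ) = 1/n + 1/n := by ring
    rw [this] at hcon
    simp only [hm]; linarith)
  have hg1S : g1 ∈ S a n Γ c c' := Finset.mem_filter.2
    ⟨Finset.mem_union.2 (Or.inr hg1G), hg1a, by simp only [hm] at hg1b hg2a ⊢; linarith⟩
  have hg2S : g2 ∈ S a n Γ c c' := Finset.mem_filter.2
    ⟨Finset.mem_union.2 (Or.inr hg2G), by simp only [hm] at hg1b hg2a ⊢; linarith, hg2b⟩
  exact h2 (Finset.one_lt_card.2 ⟨g1, hg1S, g2, hg2S, by
    simp only [hm] at hg1b hg2a; linarith⟩)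


lemma good_of_mem (hYa : Y ⊆ Set.Ioo a (a+1)) {y : ℝ} (hy : y ∈ Y) :
    GOOD Y a n Γ (CL Y a n Γ y) (CR Y a n Γ y) ∧
      y ∈ Set.Ioo (CL Y a n Γ y) (CR Y a n Γ y) := by
  have hay : a < y := (hYa hy).1
  have hya : y < a + 1 := (hYa hy).2
  obtain ⟨hClC, hClx, hClmax⟩ := CL_spec Y a n Γ hay
  obtain ⟨hCrC, hCrx, hCrmin⟩ := CR_spec Y a n Γ hya
  refine ⟨⟨hClC, hCrC, ?_⟩, hClx, hCrx⟩
  intro b hb hbI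
  rcases lt_trichotomy b y with h | h | h
  · exact absurd (hClmax b hb h) (not_le.2 hbI.1)
  · exact C_notY Y a n Γ hYa b hb (h ▸ hy)
  · exact absurd (hCrmin b hb h) (not_le.2 hbI.2)

lemma f_eq_q (hYa : Y ⊆ Set.Ioo a (a+1)) (hn0 : 0 < n) (hΓY : ↑Γ ⊆ Y)
    {c c' : ℝ} (hg : GOOD Y a n Γ c c') (h2 : ¬ 2 ≤ (S a n Γ c c').card)
    {x : ℝ} (hx : x ∈ Set.Ioo c c') : f Y a n Γ x = q Y a n Γ c c' := by
  have hf := f_on_gap Y a n Γ hYa hn0 hΓY hg hx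
  have hu : u Y a n Γ c c' = q Y a n Γ c c' := by unfold u; rw [dif_neg h2]
  have hv : v Y a n Γ c c' = q Y a n Γ c c' := by unfold v; rw [dif_neg h2]
  rw [hf, hu, hv]
  rcases le_total x (q Y a n Γ c c') with h | h
  · rw [min_eq_right h, max_eq_left h]
  · rw [min_eq_left h, max_self]

lemma image_piece (hYa : Y ⊆ Set.Ioo a (a+1)) (hn0 : 0 < n) (hΓY : ↑Γ ⊆ Y)
    {c c' : ℝ} (hg : GOOD Y a n Γ c c') :
    IsPreconnected (f Y a n Γ '' (P Y c c')) ∧ f Y a n Γ '' (P Y c c') ⊆ P Y c c' := by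
  by_cases h2 : 2 ≤ (S a n Γ c c').card
  · obtain ⟨hcu, huv, hvc, hsubY, _, _⟩ := clamp_facts Y a n Γ hYa hn0 hΓY hg h2
    have hIccP : Set.Icc (u Y a n Γ c c') (v Y a n Γ c c') ⊆ P Y c c' := by
      intro x hx
      exact ⟨hsubY hx, lt_of_lt_of_le hcu hx.1, lt_of_le_of_lt hx.2 hvc⟩
    have himg : f Y a n Γ '' (P Y c c') = Set.Icc (u Y a n Γ c c') (v Y a n Γ c c') := by
      apply Set.Subset.antisymm
      · rintro z ⟨y, hy, rfl⟩
        rw [f_on_gap Y a n Γ hYa hn0 hΓY hg hy.2]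
        constructor
        · exact le_max_left _ _
        · exact max_le huv (min_le_left _ _)
      · intro x hx
        refine ⟨x, hIccP hx, ?_⟩
        rw [f_on_gap Y a n Γ hYa hn0 hΓY hg (hIccP hx).2]
        rw [min_eq_right hx.2, max_eq_right hx.1]
    rw [himg]
    exact ⟨isPreconnected_Icc, hIccP⟩
  · rcases (P Y c c').eq_empty_or_nonempty with hP | hP
    · rw [hP, Set.image_empty]
      exact ⟨isPreconnected_empty, Set.empty_subset _⟩
    · have hq := q_mem Y a n Γ hYa hP
      have himg : f Y a n Γ '' (P Y c c') ⊆ {q Y a n Γ c c'} := by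
        rintro z ⟨y, hy, rfl⟩
        rw [f_eq_q Y a n Γ hYa hn0 hΓY hg h2 hy.2]
        rfl
      constructor
      · exact (Set.subsingleton_singleton.anti himg).isPreconnected
      · exact himg.trans (Set.singleton_subset_iff.2 hq)

lemma f_mem (hYa : Y ⊆ Set.Ioo a (a+1)) (hn0 : 0 < n) (hΓY : ↑Γ ⊆ Y)
    {y : ℝ} (hy : y ∈ Y) : f Y a n Γ y ∈ Y := by
  obtain ⟨hg, hIoo⟩ := good_of_mem Y a n Γ hYa hy
  have := (image_piece Y a n Γ hYa hn0 hΓY hg).2 ⟨y, ⟨hy, hIoo⟩, rfl⟩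
  exact this.1

lemma f_move (hYa : Y ⊆ Set.Ioo a (a+1)) (hn0 : 0 < n) (hΓY : ↑Γ ⊆ Y)
    {y : ℝ} (hy : y ∈ Y) : |y - f Y a n Γ y| ≤ 2/n := by
  have hn' : (0:ℝ) < n := by exact_mod_cast hn0
  obtain ⟨hg, hIoo⟩ := good_of_mem Y a n Γ hYa hy
  set c := CL Y a n Γ y
  set c' := CR Y a n Γ y
  by_cases h2 : 2 ≤ (S a n Γ c c').card
  · obtain ⟨hcu, huv, hvc, _, hu1, hv1⟩ := clamp_facts Y a n Γ hYa hn0 hΓY hg h2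
    have hf := f_on_gap Y a n Γ hYa hn0 hΓY hg hIoo
    rcases lt_or_ge y (u Y a n Γ c c') with h | h
    · rw [hf, min_eq_right (h.le.trans huv), max_eq_left h.le]
      rw [abs_sub_comm, abs_of_nonneg (by linarith)]
      have : y > c := hIoo.1
      have h12 : 1/(n:ℝ) ≤ 2/n := by
        have h0 : (0:ℝ) ≤ 1/n := by positivity
        have he : (2:ℝ)/n = 1/n + 1/n := by ring
        linarith
      linarith [hu1, hIoo.1]
    · rcases le_or_gt y (v Y a n Γ c c') with h' | h'
      · rw [hf, min_eq_right h', max_eq_right h]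
        simp only [sub_self, abs_zero]
        positivity
      · rw [hf, min_eq_left h'.le, max_eq_right huv]
        rw [abs_of_nonneg (by linarith)]
        have h12 : 1/(n:ℝ) ≤ 2/n := by
          have h0 : (0:ℝ) ≤ 1/n := by positivity
          have he : (2:ℝ)/n = 1/n + 1/n := by ring
          linarith
        linarith [hv1, hIoo.2]
  · have hf := f_eq_q Y a n Γ hYa hn0 hΓY hg h2 hIoo
    have hq := q_mem Y a n Γ (c := c) (c' := c') hYa ⟨y, hy, hIoo⟩
    have hshort := gap_short Y a n Γ hYa hn0 hΓY hg h2 (lt_trans hIoo.1 hIoo.2)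
    rw [hf]
    have : |y - q Y a n Γ c c'| < c' - c := by
      rw [abs_sub_lt_iff]
      constructor
      · linarith [hIoo.1, hIoo.2, hq.2.1, hq.2.2]
      · linarith [hIoo.1, hIoo.2, hq.2.1, hq.2.2]
    linarith

lemma f_fix (hYa : Y ⊆ Set.Ioo a (a+1)) (hn0 : 0 < n) (hΓY : ↑Γ ⊆ Y)
    {y : ℝ} (hy : y ∈ Y) (hyT : y ∈ T a n Γ) : f Y a n Γ y = y := by
  obtain ⟨hg, hIoo⟩ := good_of_mem Y a n Γ hYa hy
  set c := CL Y a n Γ y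
  set c' := CR Y a n Γ y
  have hyS : y ∈ S a n Γ c c' := Finset.mem_filter.2 ⟨hyT, hIoo⟩
  by_cases h2 : 2 ≤ (S a n Γ c c').card
  · have hne : (S a n Γ c c').Nonempty := ⟨y, hyS⟩
    have hu : u Y a n Γ c c' = (S a n Γ c c').min' hne := by unfold u; rw [dif_pos h2]
    have hv : v Y a n Γ c c' = (S a n Γ c c').max' hne := by unfold v; rw [dif_pos h2]
    have h1 : u Y a n Γ c c' ≤ y := hu ▸ Finset.min'_le _ _ hyS
    have h2' : y ≤ v Y a n Γ c c' := hv ▸ Finset.le_max' _ _ hyS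
    rw [f_on_gap Y a n Γ hYa hn0 hΓY hg hIoo, min_eq_right h2', max_eq_right h1]
  · have hcard : (S a n Γ c c').card = 1 := by
      have : 0 < (S a n Γ c c').card := Finset.card_pos.2 ⟨y, hyS⟩
      omega
    obtain ⟨b, hb⟩ := Finset.card_eq_one.1 hcard
    have hby : b = y := by
      have := hyS
      rw [hb, Finset.mem_singleton] at this
      exact this.symm
    subst hby
    have hne : (S a n Γ c c').Nonempty := ⟨b, hyS⟩
    have ht0 : t0 a n Γ c c' = b := by
      have hmm := Finset.mem_singleton.1 (hb.le (Finset.min'_mem _ hne))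
      unfold t0
      rw [dif_pos hne]
      exact hmm
    have hqb : q Y a n Γ c c' = b := by
      unfold q
      rw [ht0, if_pos hy]
    rw [f_eq_q Y a n Γ hYa hn0 hΓY hg h2 hIoo, hqb]

lemma f_contAt (hYa : Y ⊆ Set.Ioo a (a+1)) (hn0 : 0 < n) (hΓY : ↑Γ ⊆ Y)
    {y : ℝ} (hy : y ∈ Y) : ContinuousAt (f Y a n Γ) y := by
  obtain ⟨hg, hIoo⟩ := good_of_mem Y a n Γ hYa hy
  set c := CL Y a n Γ y
  set c' := CR Y a n Γ y
  have hmem : Set.Ioo c c' ∈ nhds y := isOpen_Ioo.mem_nhds hIoo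
  have heq : (fun x => max (u Y a n Γ c c') (min (v Y a n Γ c c') x)) =ᶠ[nhds y]
      f Y a n Γ := by
    filter_upwards [hmem] with x hx
    exact (f_on_gap Y a n Γ hYa hn0 hΓY hg hx).symm
  exact ContinuousAt.congr
    ((continuous_const.max (continuous_const.min continuous_id)).continuousAt) heq


lemma finComp {α : Type} [TopologicalSpace α] (R : Set α) {ι : Type} [Finite ι]
    (A : ι → Set α) (hc : ∀ i, IsPreconnected (A i)) (hsub : ∀ i, A i ⊆ R)
    (hcov : R ⊆ ⋃ i, A i) : Finite (ConnectedComponents R) := by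
  rcases isEmpty_or_nonempty R with hR | hR
  · haveI : Finite R := Finite.of_subsingleton
    exact Finite.of_surjective _ ConnectedComponents.surjective_coe
  · obtain ⟨r0⟩ := hR
    apply Finite.of_surjective (fun i : ι =>
      if hi : ∃ x : α, x ∈ A i then
        ConnectedComponents.mk (⟨hi.choose, hsub i hi.choose_spec⟩ : R)
      else ConnectedComponents.mk r0)
    intro comp
    obtain ⟨⟨x, hx⟩, rfl⟩ := ConnectedComponents.surjective_coe comp
    obtain ⟨i, hxi⟩ : ∃ i, x ∈ A i := by simpa using hcov hx
    refine ⟨i, ?_⟩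
    have hi : ∃ z : α, z ∈ A i := ⟨x, hxi⟩
    dsimp only
    rw [dif_pos hi]
    rw [ConnectedComponents.coe_eq_coe]
    haveI := Subtype.preconnectedSpace (hc i)
    have hpre : IsPreconnected {z : R | (z : α) ∈ A i} := by
      rw [← Set.range_inclusion (hsub i)]
      exact isPreconnected_range (continuous_inclusion (hsub i))
    exact connectedComponent_eq
      ((hpre.subset_connectedComponent
        (x := (⟨hi.choose, hsub i hi.choose_spec⟩ : R)) hi.choose_spec) hxi)

lemma real_main (Y : Set ℝ) (a : ℝ) (hYa : Y ⊆ Set.Ioo a (a+1))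
    (Γ : Set ℝ) (hΓ : Γ.Finite) (hΓY : Γ ⊆ Y) (δ : ℝ) (hδ : 0 < δ) :
    ∃ f : ℝ → ℝ,
      (∀ y ∈ Y, ContinuousAt f y) ∧ (∀ y ∈ Y, f y ∈ Y) ∧ (∀ γ ∈ Γ, f γ = γ) ∧
      (∀ y ∈ Y, |y - f y| ≤ δ) ∧
      ∃ (ι : Type) (_ : Finite ι) (A : ι → Set ℝ),
        (∀ i, IsPreconnected (A i)) ∧ (∀ i, A i ⊆ f '' Y) ∧ f '' Y ⊆ ⋃ i, A i := by
  set n : ℕ := max 1 ⌈2/δ⌉₊ with hn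
  have hn0 : 0 < n := lt_of_lt_of_le Nat.one_pos (le_max_left _ _)
  have hn' : (0:ℝ) < n := by exact_mod_cast hn0
  have h2n : 2/(n:ℝ) ≤ δ := by
    have h1 : 2/δ ≤ (⌈2/δ⌉₊ : ℝ) := Nat.le_ceil _
    have h2 : (⌈2/δ⌉₊ : ℝ) ≤ n := by exact_mod_cast le_max_right 1 ⌈2/δ⌉₊
    rw [div_le_iff₀ hn']
    rw [div_le_iff₀ hδ] at h1
    nlinarith
  set Γf : Finset ℝ := hΓ.toFinset with hΓf
  have hΓY' : ↑Γf ⊆ Y := by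
    intro x hx
    rw [hΓf, Set.Finite.coe_toFinset] at hx
    exact hΓY hx
  refine ⟨f Y a n Γf, ?_, ?_, ?_, ?_, ?_⟩
  · exact fun y hy => f_contAt Y a n Γf hYa hn0 hΓY' hy
  · exact fun y hy => f_mem Y a n Γf hYa hn0 hΓY' hy
  · intro γ hγ
    refine f_fix Y a n Γf hYa hn0 hΓY' (hΓY hγ) ?_
    exact Finset.mem_union.2 (Or.inl (by rw [hΓf]; exact hΓ.mem_toFinset.2 hγ))
  · exact fun y hy => le_trans (f_move Y a n Γf hYa hn0 hΓY' hy) h2n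
  · refine ⟨{p : ℝ × ℝ // p ∈ (C Y a n Γf) ×ˢ (C Y a n Γf)}, inferInstance,
      fun i => if GOOD Y a n Γf i.1.1 i.1.2 then f Y a n Γf '' (P Y i.1.1 i.1.2) else ∅,
      ?_, ?_, ?_⟩
    · intro i
      dsimp only
      split_ifs with hg
      · exact (image_piece Y a n Γf hYa hn0 hΓY' hg).1
      · exact isPreconnected_empty
    · intro i
      dsimp only
      split_ifs with hg
      · exact Set.image_mono Set.inter_subset_left
      · exact Set.empty_subset _
    · rintro z ⟨y, hy, rfl⟩
      obtain ⟨hg, hIoo⟩ := good_of_mem Y a n Γf hYa hy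
      refine Set.mem_iUnion.2 ⟨⟨(CL Y a n Γf y, CR Y a n Γf y),
        Finset.mem_product.2 ⟨hg.1, hg.2.1⟩⟩, ?_⟩
      dsimp only
      rw [if_pos hg]
      exact ⟨y, ⟨hy, hIoo⟩, rfl⟩


/- circle part -/

noncomputable def EE (t : ℝ) : Circle := Circle.exp (2 * Real.pi * t)

lemma EE_coe (t : ℝ) : (EE t : ℂ) = expc t := by
  rw [EE, Circle.coe_exp, expc]
  push_cast
  ring_nf

lemma EE_cont : Continuous EE :=
  Circle.exp.continuous.comp (continuous_const.mul continuous_id)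

lemma EE_surj : Function.Surjective EE := by
  intro z
  refine ⟨Complex.arg z / (2 * Real.pi), ?_⟩
  have hπ : (2 * Real.pi) ≠ 0 := by positivity
  rw [EE, mul_div_cancel₀ _ hπ]
  exact Circle.exp_arg z

lemma expc_add (s t : ℝ) : expc (s + t) = expc s * expc t := by
  rw [expc, expc, expc, ← Complex.exp_add]
  push_cast
  ring_nf

lemma expc_half : expc (1/2) = -1 := by
  rw [expc]
  push_cast
  rw [show (2 * (Real.pi:ℂ) * Complex.I * (1/2 : ℂ)) = Real.pi * Complex.I by ring]
  exact Complex.exp_pi_mul_I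

lemma abs_expc (t : ℝ) : ‖expc t‖ = 1 := by
  rw [expc, Complex.norm_exp]
  norm_num [Complex.mul_re, Complex.ofReal_re, Complex.ofReal_im, Complex.I_re, Complex.I_im]

noncomputable def lift (a : ℝ) (z : Circle) : ℝ :=
  a + 1/2 + Complex.arg ((z : ℂ) / expc (a + 1/2)) / (2 * Real.pi)

lemma abs_xi (a : ℝ) (z : Circle) : ‖(z : ℂ) / expc (a + 1/2)‖ = 1 := by
  rw [norm_div, abs_expc, Circle.norm_coe, div_one]

lemma expc_pi_ne : (Real.pi : ℂ) ≠ 0 := Complex.ofReal_ne_zero.mpr Real.pi_ne_zero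

lemma expc_ne (t : ℝ) : expc t ≠ 0 := by
  intro h
  have := abs_expc t
  rw [h] at this
  simp at this

lemma expc_div_two_pi (x : ℝ) :
    expc (x / (2 * Real.pi)) = Complex.exp (x * Complex.I) := by
  rw [expc]
  congr 1
  push_cast
  have hπ := expc_pi_ne
  field_simp

lemma EE_lift (a : ℝ) (z : Circle) : EE (lift a z) = z := by
  have habs : ‖(z : ℂ) / expc (a + 1/2)‖ = 1 := abs_xi a z
  have hexp : Complex.exp ((Complex.arg ((z : ℂ) / expc (a + 1/2)) : ℂ) * Complex.I)
      = (z : ℂ) / expc (a + 1/2) := by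
    have h := Complex.norm_mul_exp_arg_mul_I ((z : ℂ) / expc (a + 1/2))
    rw [habs] at h
    simpa using h
  have hne : expc (a + 1/2) ≠ 0 := expc_ne _
  apply Subtype.ext
  rw [EE_coe, lift, expc_add, expc_div_two_pi, hexp, mul_comm, div_mul_cancel₀ _ hne]

lemma expc_aE (a : ℝ) : expc a = - expc (a + 1/2) := by
  rw [expc_add, expc_half]
  ring

lemma xi_ne_neg_one {a : ℝ} {z : Circle} (hz : z ≠ EE a) :
    (z : ℂ) / expc (a + 1/2) ≠ -1 := by
  intro h
  apply hz
  apply Subtype.ext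
  rw [EE_coe]
  rw [div_eq_iff (expc_ne _)] at h
  rw [h, expc_aE a]
  ring

lemma lift_mem {a : ℝ} {z : Circle} (hz : z ≠ EE a) : lift a z ∈ Set.Ioo a (a+1) := by
  have habs : ‖(z : ℂ) / expc (a + 1/2)‖ = 1 := abs_xi a z
  have hπ : (0:ℝ) < Real.pi := Real.pi_pos
  have h2π : (0:ℝ) < 2 * Real.pi := by positivity
  have harg1 := Complex.arg_le_pi ((z : ℂ) / expc (a + 1/2))
  have harg2 := Complex.neg_pi_lt_arg ((z : ℂ) / expc (a + 1/2))
  have hlt : Complex.arg ((z : ℂ) / expc (a + 1/2)) < Real.pi := by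
    rcases lt_or_eq_of_le harg1 with h | h
    · exact h
    · exfalso
      apply xi_ne_neg_one hz
      have h' := Complex.norm_mul_exp_arg_mul_I ((z : ℂ) / expc (a + 1/2))
      rw [habs, h, Complex.exp_pi_mul_I] at h'
      simpa using h'.symm
  have hb1 : -(1/2:ℝ) < Complex.arg ((z : ℂ) / expc (a + 1/2)) / (2*Real.pi) := by
    rw [lt_div_iff₀ h2π]
    linarith
  have hb2 : Complex.arg ((z : ℂ) / expc (a + 1/2)) / (2*Real.pi) < 1/2 := by
    rw [div_lt_iff₀ h2π]
    linarith
  rw [lift]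
  constructor
  · linarith
  · linarith

lemma lift_contAt {a : ℝ} {z : Circle} (hz : z ≠ EE a) :
    ContinuousAt (lift a) z := by
  have habs : ‖(z : ℂ) / expc (a + 1/2)‖ = 1 := abs_xi a z
  have hargc : ContinuousAt Complex.arg ((z : ℂ) / expc (a + 1/2)) := by
    apply Complex.continuousAt_arg
    by_cases him : ((z : ℂ) / expc (a + 1/2)).im ≠ 0
    · exact Or.inr him
    · push_neg at him
      left
      have hsq : ((z : ℂ) / expc (a + 1/2)).re ^ 2 = 1 := by
        have h1 := Complex.sq_norm ((z : ℂ) / expc (a + 1/2))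
        rw [habs, Complex.normSq_apply, him] at h1
        nlinarith
      have hfac : (((z : ℂ) / expc (a + 1/2)).re - 1) *
          (((z : ℂ) / expc (a + 1/2)).re + 1) = 0 := by nlinarith
      rcases mul_eq_zero.1 hfac with h1 | h1
      · have : ((z : ℂ) / expc (a + 1/2)).re = 1 := by linarith
        rw [this]; norm_num
      · exfalso
        apply xi_ne_neg_one hz
        apply Complex.ext
        · have : ((z : ℂ) / expc (a + 1/2)).re = -1 := by linarith
          rw [this]
          norm_num
        · rw [him]
          norm_num
  have hinner : ContinuousAt (fun w : Circle => (w : ℂ) / expc (a + 1/2)) z :=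
    (continuous_subtype_val.div_const _).continuousAt
  apply ContinuousAt.add continuousAt_const
  apply ContinuousAt.div_const
  exact ContinuousAt.comp (g := Complex.arg)
    (f := fun w : Circle => (w : ℂ) / expc (a + 1/2)) hargc hinner

end S17



/-- for a closed `X ⊆ 𝕋`, a finite `G ⊆ X` and `δ > 0`, there is
a closed `R ⊆ X` with finitely many connected components containing `G`, and a
continuous surjection `g : X → R` fixing `G` pointwise and moving every point
by at most `δ` in the arc-length metric (`ρ(g z, z) ≤ δ` being expressed by
real lifts `s, t` with `|s - t| ≤ δ`). -/
theorem stmt_17 (X : Set Circle) (hX : IsClosed X)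
    (G : Set Circle) (hG : G.Finite) (hGX : G ⊆ X) (δ : ℝ) (hδ : 0 < δ) :
    ∃ R : Set Circle, R ⊆ X ∧ IsClosed R ∧ G ⊆ R ∧
      Finite (ConnectedComponents R) ∧
      ∃ g : X → R, Continuous g ∧ Function.Surjective g ∧
        (∀ z : X, (z : Circle) ∈ G → ((g z : Circle) : ℂ) = ((z : Circle) : ℂ)) ∧
        (∀ z : X, ∃ s t : ℝ, ((z : Circle) : ℂ) = expc s ∧
          ((g z : Circle) : ℂ) = expc t ∧ |s - t| ≤ δ) := by
  by_cases huniv : X = Set.univ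
  · refine ⟨Set.univ, by rw [huniv], isClosed_univ, Set.subset_univ _, ?_, ?_⟩
    · apply S17.finComp (Set.univ : Set Circle) (ι := Unit) (A := fun _ => Set.univ)
      · intro _
        rw [← Set.range_eq_univ.mpr S17.EE_surj]
        exact isPreconnected_range S17.EE_cont
      · intro _; exact subset_rfl
      · intro x _; exact Set.mem_iUnion.2 ⟨(), trivial⟩
    · refine ⟨fun z => ⟨z.1, trivial⟩, ?_, ?_, ?_, ?_⟩
      · exact continuous_subtype_val.subtype_mk _
      · rintro ⟨w, hw⟩
        exact ⟨⟨w, by rw [huniv]; trivial⟩, rfl⟩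
      · intro z _; rfl
      · intro z
        obtain ⟨s, hs⟩ := S17.EE_surj (z : Circle)
        refine ⟨s, s, ?_, ?_, by simp [hδ.le]⟩
        · rw [← hs, S17.EE_coe]
        · show ((z : Circle) : ℂ) = expc s
          rw [← hs, S17.EE_coe]
  · obtain ⟨z₀, hz₀⟩ : ∃ z₀ : Circle, z₀ ∉ X := by
      by_contra h
      push_neg at h
      exact huniv (Set.eq_univ_of_forall h)
    obtain ⟨a, ha⟩ := S17.EE_surj z₀
    have hXa : ∀ z ∈ X, z ≠ S17.EE a := by
      intro z hz h
      rw [h, ha] at hz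
      exact hz₀ hz
    set Y := S17.lift a '' X with hY
    have hYa : Y ⊆ Set.Ioo a (a+1) := by
      rintro y ⟨z, hzX, rfl⟩
      exact S17.lift_mem (hXa z hzX)
    obtain ⟨f, hfc, hfY, hffix, hfmove, ι, hι, A, hA1, hA2, hA3⟩ :=
      S17.real_main Y a hYa (S17.lift a '' G) (hG.image _) (Set.image_mono hGX) δ hδ
    haveI : Finite ι := hι
    set F : X → Circle := fun z => S17.EE (f (S17.lift a ↑z)) with hF
    have hliftY : ∀ z : X, S17.lift a ↑z ∈ Y := fun z => ⟨↑z, z.2, rfl⟩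
    have hEEY : ∀ y ∈ Y, ∀ x ∈ Y, f x = y → True := fun _ _ _ _ _ => trivial
    have hEE_of_Y : ∀ y ∈ Y, S17.EE y ∈ X := by
      rintro y ⟨x', hx'X, rfl⟩
      rw [S17.EE_lift]
      exact hx'X
    have hFX : ∀ z : X, F z ∈ X := fun z => hEE_of_Y _ (hfY _ (hliftY z))
    have hFcont : Continuous F := by
      rw [continuous_iff_continuousAt]
      intro z
      have h1 : ContinuousAt (fun z : X => S17.lift a ↑z) z :=
        ContinuousAt.comp (g := S17.lift a)
          (S17.lift_contAt (hXa ↑z z.2)) continuousAt_subtype_val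
      have h2 : ContinuousAt (fun z : X => f (S17.lift a ↑z)) z :=
        ContinuousAt.comp (g := f) (hfc _ (hliftY z)) h1
      exact ContinuousAt.comp (g := S17.EE) S17.EE_cont.continuousAt h2
    refine ⟨Set.range F, ?_, ?_, ?_, ?_, ?_⟩
    · rintro w ⟨z, rfl⟩
      exact hFX z
    · have hXcomp : IsCompact X := hX.isCompact
      haveI : CompactSpace ↥X := isCompact_iff_compactSpace.mp hXcomp
      exact (isCompact_range hFcont).isClosed
    · intro w hw
      have h1 : f (S17.lift a w) = S17.lift a w :=
        hffix _ (Set.mem_image_of_mem _ hw)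
      refine ⟨⟨w, hGX hw⟩, ?_⟩
      show S17.EE (f (S17.lift a w)) = w
      rw [h1, S17.EE_lift]
    · apply S17.finComp (Set.range F) (ι := ι) (A := fun i => S17.EE '' A i)
      · intro i
        exact (hA1 i).image _ S17.EE_cont.continuousOn
      · intro i
        rintro w ⟨x, hx, rfl⟩
        obtain ⟨y, hyY, rfl⟩ := hA2 i hx
        obtain ⟨x', hx'X, rfl⟩ := hyY
        exact ⟨⟨x', hx'X⟩, rfl⟩
      · rintro w ⟨z, rfl⟩
        have : f (S17.lift a ↑z) ∈ ⋃ i, A i := hA3 ⟨_, hliftY z, rfl⟩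
        obtain ⟨i, hi⟩ := Set.mem_iUnion.1 this
        exact Set.mem_iUnion.2 ⟨i, Set.mem_image_of_mem _ hi⟩
    · refine ⟨fun z => ⟨F z, Set.mem_range_self z⟩, ?_, ?_, ?_, ?_⟩
      · exact hFcont.subtype_mk _
      · rintro ⟨w, z, rfl⟩
        exact ⟨z, rfl⟩
      · intro z hz
        have h1 : f (S17.lift a ↑z) = S17.lift a ↑z :=
          hffix _ (Set.mem_image_of_mem _ hz)
        show ((S17.EE (f (S17.lift a ↑z)) : Circle) : ℂ) = _
        rw [h1, S17.EE_lift]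
      · intro z
        refine ⟨S17.lift a ↑z, f (S17.lift a ↑z), ?_, S17.EE_coe _, ?_⟩
        · rw [← S17.EE_coe (S17.lift a ↑z)]
          exact (congrArg Subtype.val (S17.EE_lift a ↑z)).symm
        · exact hfmove _ (hliftY z)
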